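/- Let $\{a_n\}_{n\ge 1}$ and $\{b_n\}_{n\ge 1}$ be sequences of positive real numbers. Then $\limsup_{n\to\infty} \frac{1}{n}\log\left(\sum_{k=1}^{n} a_k b_{n-k}\right) = \max\left\{\limsup_{n\to\infty}\frac{1}{n}\log a_n,\ \limsup_{n\to\infty}\frac{1}{n}\log b_n\right\}$ (where $b_0$ is also assumed positive). -/

import Mathlib

open Filter

private lemma ereal_le_of_forall_real_lt {x y : EReal}
    (h : ∀ M : ℝ, y < (M : EReal) → x ≤ (M : EReal)) : x ≤ y := by
  by_contra h'
  push_neg at h'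
  obtain ⟨M, hM1, hM2⟩ := EReal.exists_between_coe_real h'
  exact absurd (h M hM1) (not_le.mpr hM2)

/-- For sequences of positive reals `a`, `b`,
`limsup (1/n) log (∑_{k=1}^n a_k b_{n-k}) = max (limsup (1/n) log a_n) (limsup (1/n) log b_n)`
in the extended reals. -/
theorem stmt0 (a b : ℕ → ℝ) (ha : ∀ n, 0 < a n) (hb : ∀ n, 0 < b n) :
    Filter.atTop.limsup (fun n : ℕ =>
        ((Real.log (∑ k ∈ Finset.Icc 1 n, a k * b (n - k)) / n : ℝ) : EReal)) =
      max (Filter.atTop.limsup fun n : ℕ => ((Real.log (a n) / n : ℝ) : EReal))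
        (Filter.atTop.limsup fun n : ℕ => ((Real.log (b n) / n : ℝ) : EReal)) := by
  set c : ℕ → ℝ := fun n => ∑ k ∈ Finset.Icc 1 n, a k * b (n - k) with hc
  have hcpos : ∀ n, 1 ≤ n → 0 < c n := by
    intro n hn
    apply Finset.sum_pos
    · intro k hk; exact mul_pos (ha k) (hb _)
    · exact ⟨1, Finset.mem_Icc.mpr ⟨le_refl 1, hn⟩⟩
  -- single-term lower bounds
  have hab : ∀ n, 1 ≤ n → a n * b 0 ≤ c n := by
    intro n hn
    have : a n * b (n - n) ≤ c n := by
      apply Finset.single_le_sum (f := fun k => a k * b (n - k))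
      · intro k hk; exact (mul_pos (ha k) (hb _)).le
      · exact Finset.mem_Icc.mpr ⟨hn, le_refl n⟩
    simpa using this
  have hba : ∀ n, 1 ≤ n → a 1 * b (n - 1) ≤ c n := by
    intro n hn
    apply Finset.single_le_sum (f := fun k => a k * b (n - k))
    · intro k hk; exact (mul_pos (ha k) (hb _)).le
    · exact Finset.mem_Icc.mpr ⟨le_refl 1, hn⟩
  set C := Filter.atTop.limsup (fun n : ℕ => ((Real.log (c n) / n : ℝ) : EReal)) with hCdef
  set A := Filter.atTop.limsup (fun n : ℕ => ((Real.log (a n) / n : ℝ) : EReal)) with hAdef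
  set B := Filter.atTop.limsup (fun n : ℕ => ((Real.log (b n) / n : ℝ) : EReal)) with hBdef
  apply le_antisymm
  · -- C ≤ max A B
    apply ereal_le_of_forall_real_lt
    intro M hM
    have hAM : A < (M : EReal) := lt_of_le_of_lt (le_max_left _ _) hM
    have hBM : B < (M : EReal) := lt_of_le_of_lt (le_max_right _ _) hM
    have hAev := Filter.eventually_lt_of_limsup_lt hAM
    have hBev := Filter.eventually_lt_of_limsup_lt hBM
    rw [Filter.eventually_atTop] at hAev hBev
    obtain ⟨Na, hNa⟩ := hAev
    obtain ⟨Nb, hNb⟩ := hBev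
    set N := max (max Na Nb) 1 with hN
    -- constant K
    set K : ℝ := 1 + ∑ j ∈ Finset.range N,
        (a j / Real.exp (M * j) + b j / Real.exp (M * j)) with hK
    have hKsum : (0:ℝ) ≤ ∑ j ∈ Finset.range N,
        (a j / Real.exp (M * j) + b j / Real.exp (M * j)) := by
      apply Finset.sum_nonneg
      intro j _
      exact add_nonneg (div_nonneg (ha j).le (Real.exp_pos _).le)
        (div_nonneg (hb j).le (Real.exp_pos _).le)
    have hK1 : (1:ℝ) ≤ K := by simp [hK]; linarith
    have hKpos : (0:ℝ) < K := lt_of_lt_of_le one_pos hK1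
    have hbound : ∀ f : ℕ → ℝ, (∀ n, 0 < f n) →
        (∀ n, N ≤ n → ((Real.log (f n) / n : ℝ) : EReal) < (M:EReal)) →
        (∀ j, j ∈ Finset.range N →
          f j / Real.exp (M * j) ≤ ∑ j ∈ Finset.range N,
            (a j / Real.exp (M * j) + b j / Real.exp (M * j))) →
        ∀ n, f n ≤ K * Real.exp (M * n) := by
      intro f hf hlt hsm n
      rcases le_or_gt N n with h | h
      · have hn1 : (1:ℕ) ≤ n := le_trans (le_max_right _ 1) h
        have := hlt n h
        rw [EReal.coe_lt_coe_iff] at this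
        have hnpos : (0:ℝ) < n := by exact_mod_cast hn1
        have hlog : Real.log (f n) < M * n := by
          have := (div_lt_iff₀ hnpos).mp this
          linarith [this]
        have hfe : f n ≤ Real.exp (M * n) := by
          rw [← Real.exp_log (hf n)]
          exact Real.exp_le_exp.mpr hlog.le
        exact hfe.trans (le_mul_of_one_le_left (Real.exp_pos _).le hK1)
      · have hj := hsm n (Finset.mem_range.mpr h)
        have : f n / Real.exp (M * n) ≤ K := by
          calc f n / Real.exp (M * n) ≤ _ := hj
          _ ≤ K := by simp [hK]
        calc f n = f n / Real.exp (M * n) * Real.exp (M * n) := by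
              field_simp
        _ ≤ K * Real.exp (M * n) := by
              exact mul_le_mul_of_nonneg_right this (Real.exp_pos _).le
    have haK : ∀ n, a n ≤ K * Real.exp (M * n) := by
      apply hbound a ha
      · intro n hn; exact hNa n (le_trans (le_trans (le_max_left _ _) (le_max_left _ 1)) hn)
      · intro j hj
        apply Finset.single_le_sum (f := fun j => a j / Real.exp (M * j) + b j / Real.exp (M * j))
          (fun j _ => add_nonneg (div_nonneg (ha j).le (Real.exp_pos _).le)
            (div_nonneg (hb j).le (Real.exp_pos _).le)) hj |>.trans'
        have : (0:ℝ) ≤ b j / Real.exp (M * j) := div_nonneg (hb j).le (Real.exp_pos _).le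
        linarith
    have hbK : ∀ n, b n ≤ K * Real.exp (M * n) := by
      apply hbound b hb
      · intro n hn; exact hNb n (le_trans (le_trans (le_max_right _ _) (le_max_left _ 1)) hn)
      · intro j hj
        apply Finset.single_le_sum (f := fun j => a j / Real.exp (M * j) + b j / Real.exp (M * j))
          (fun j _ => add_nonneg (div_nonneg (ha j).le (Real.exp_pos _).le)
            (div_nonneg (hb j).le (Real.exp_pos _).le)) hj |>.trans'
        have : (0:ℝ) ≤ a j / Real.exp (M * j) := div_nonneg (ha j).le (Real.exp_pos _).le
        linarith
    -- bound c n
    have hcK : ∀ n, 1 ≤ n → c n ≤ n * (K^2 * Real.exp (M * n)) := by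
      intro n hn
      have : c n ≤ ∑ k ∈ Finset.Icc 1 n, K^2 * Real.exp (M * n) := by
        apply Finset.sum_le_sum
        intro k hk
        obtain ⟨hk1, hkn⟩ := Finset.mem_Icc.mp hk
        have hcast : ((n - k : ℕ) : ℝ) = (n : ℝ) - (k : ℝ) := by
          rw [Nat.cast_sub hkn]
        calc a k * b (n - k) ≤ (K * Real.exp (M * k)) * (K * Real.exp (M * (n - k : ℕ))) := by
              apply mul_le_mul (haK k) (hbK _) (hb _).le
              positivity
        _ = K^2 * Real.exp (M * n) := by
              rw [hcast, mul_mul_mul_comm, ← Real.exp_add, ← sq]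
              congr 1
              exact congrArg Real.exp (by ring)
      calc c n ≤ _ := this
      _ = n * (K^2 * Real.exp (M * n)) := by
            rw [Finset.sum_const, Nat.card_Icc]
            simp [nsmul_eq_mul]
    -- log bound
    have hlogc : ∀ n : ℕ, 1 ≤ n →
        Real.log (c n) / n ≤ (Real.log n + 2 * Real.log K) / n + M := by
      intro n hn
      have hnpos : (0:ℝ) < n := by exact_mod_cast hn
      have h1 : Real.log (c n) ≤ Real.log (n * (K^2 * Real.exp (M * n))) :=
        Real.log_le_log (hcpos n hn) (hcK n hn)
      have h2 : Real.log ((n:ℝ) * (K^2 * Real.exp (M * n)))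
          = Real.log n + 2 * Real.log K + M * n := by
        rw [Real.log_mul (ne_of_gt hnpos) (by positivity),
          Real.log_mul (by positivity) (Real.exp_ne_zero _), Real.log_exp,
          Real.log_pow]
        push_cast; ring
      rw [h2] at h1
      rw [div_le_iff₀ hnpos]
      have h3 : ((Real.log n + 2 * Real.log K) / n + M) * n
          = Real.log n + 2 * Real.log K + M * n := by field_simp
      linarith
    -- tendsto of RHS
    have htend : Filter.Tendsto (fun n : ℕ =>
        (((Real.log n + 2 * Real.log K) / n + M : ℝ) : EReal)) Filter.atTop
        (nhds ((M:ℝ) : EReal)) := by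
      apply Filter.Tendsto.comp (continuous_coe_real_ereal.tendsto _)
      have h0 : Filter.Tendsto (fun n : ℕ => (Real.log n + 2 * Real.log K) / n)
          Filter.atTop (nhds 0) := by
        have h1 : Filter.Tendsto (fun n : ℕ => Real.log n / n) Filter.atTop (nhds 0) := by
          have := Real.isLittleO_log_id_atTop.tendsto_div_nhds_zero
          exact this.comp tendsto_natCast_atTop_atTop
        have h2 : Filter.Tendsto (fun n : ℕ => (2 * Real.log K) / n) Filter.atTop (nhds 0) :=
          tendsto_const_div_atTop_nhds_zero_nat _
        have := h1.add h2
        simp only [add_zero] at this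
        apply this.congr
        intro n
        rw [← add_div]
      have := h0.add_const M
      simpa using this
    have hle : C ≤ Filter.atTop.limsup (fun n : ℕ =>
        (((Real.log n + 2 * Real.log K) / n + M : ℝ) : EReal)) := by
      apply Filter.limsup_le_limsup ?_ (by isBoundedDefault) (by isBoundedDefault)
      filter_upwards [Filter.eventually_ge_atTop 1] with n hn
      exact EReal.coe_le_coe_iff.mpr (hlogc n hn)
    rw [htend.limsup_eq] at hle
    exact hle
  · -- max A B ≤ C
    have key : ∀ M : ℝ, C < (M:EReal) → A ≤ (M:EReal) ∧ B ≤ (M:EReal) := by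
      intro M hM
      obtain ⟨M', hM'1, hM'2⟩ := EReal.exists_between_coe_real hM
      rw [EReal.coe_lt_coe_iff] at hM'2
      have hCev := Filter.eventually_lt_of_limsup_lt hM'1
      rw [Filter.eventually_atTop] at hCev
      obtain ⟨N, hN⟩ := hCev
      have hNlog : ∀ n, N ≤ n → 1 ≤ n → Real.log (c n) < M' * n := by
        intro n hn hn1
        have := hN n hn
        rw [EReal.coe_lt_coe_iff] at this
        have hnpos : (0:ℝ) < n := by exact_mod_cast hn1
        have := (div_lt_iff₀ hnpos).mp this
        linarith
      constructor
      · -- A ≤ M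
        apply Filter.limsup_le_of_le (by isBoundedDefault)
        have h1 : Filter.Tendsto (fun n : ℕ => (- Real.log (b 0)) / n) Filter.atTop
            (nhds 0) := tendsto_const_div_atTop_nhds_zero_nat _
        have h2 : ∀ᶠ n : ℕ in Filter.atTop, (- Real.log (b 0)) / n < M - M' := by
          apply h1.eventually_lt_const
          linarith
        filter_upwards [Filter.eventually_ge_atTop (max N 1), h2] with n hn hsm
        have hn1 : (1:ℕ) ≤ n := le_trans (le_max_right N 1) hn
        have hnN : N ≤ n := le_trans (le_max_left N 1) hn
        have hnpos : (0:ℝ) < n := by exact_mod_cast hn1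
        rw [EReal.coe_le_coe_iff]
        have hlog : Real.log (a n) + Real.log (b 0) ≤ Real.log (c n) := by
          rw [← Real.log_mul (ne_of_gt (ha n)) (ne_of_gt (hb 0))]
          exact Real.log_le_log (mul_pos (ha n) (hb 0)) (hab n hn1)
        have hcn := hNlog n hnN hn1
        have hineq : Real.log (a n) / n ≤ M' + (- Real.log (b 0)) / n := by
          rw [div_le_iff₀ hnpos]
          have heq : (M' + (- Real.log (b 0)) / n) * n = M' * n - Real.log (b 0) := by
            field_simp
            ring
          linarith
        linarith
      · -- B ≤ M
        apply Filter.limsup_le_of_le (by isBoundedDefault)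
        have h1 : Filter.Tendsto (fun n : ℕ => (M' - Real.log (a 1)) / n) Filter.atTop
            (nhds 0) := tendsto_const_div_atTop_nhds_zero_nat _
        have h2 : ∀ᶠ n : ℕ in Filter.atTop, (M' - Real.log (a 1)) / n < M - M' := by
          apply h1.eventually_lt_const
          linarith
        filter_upwards [Filter.eventually_ge_atTop (max N 1), h2] with n hn hsm
        have hn1 : (1:ℕ) ≤ n := le_trans (le_max_right N 1) hn
        have hnN : N ≤ n := le_trans (le_max_left N 1) hn
        have hnpos : (0:ℝ) < n := by exact_mod_cast hn1
        rw [EReal.coe_le_coe_iff]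
        -- c (n+1) ≥ a 1 * b n
        have hsub : (n + 1) - 1 = n := by omega
        have hlow : a 1 * b n ≤ c (n + 1) := by
          have := hba (n + 1) (by omega)
          rwa [hsub] at this
        have hlog : Real.log (a 1) + Real.log (b n) ≤ Real.log (c (n + 1)) := by
          rw [← Real.log_mul (ne_of_gt (ha 1)) (ne_of_gt (hb n))]
          exact Real.log_le_log (mul_pos (ha 1) (hb n)) hlow
        have hcn1 := hNlog (n + 1) (by omega) (by omega)
        have : Real.log (b n) ≤ M' * (n + 1) - Real.log (a 1) := by
          push_cast at hcn1 ⊢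
          linarith
        have hineq : Real.log (b n) / n ≤ M' + (M' - Real.log (a 1)) / n := by
          rw [div_le_iff₀ hnpos]
          have heq : (M' + (M' - Real.log (a 1)) / n) * n
              = M' * (n + 1) - Real.log (a 1) := by field_simp; ring
          linarith
        linarith
    apply ereal_le_of_forall_real_lt
    intro M hM
    exact max_le (key M hM).1 (key M hM).2
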